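/- Let the finite simple graph G be the join of two disjoint graphs G_1 and G_2 (that is, G is obtained from the disjoint union of G_1 and G_2 by adding all edges between V(G_1) and V(G_2)). If M is an acyclic matching in G, then either M ⊆ E(G_1), or M ⊆ E(G_2), or M consists of exactly one edge joining a vertex of G_1 to a vertex of G_2. -/

import Mathlib

open SimpleGraph

/-- The *join* of two disjoint graphs `G₁` and `G₂`: the graph on `V(G₁) ⊕ V(G₂)`
obtained from the disjoint union of `G₁` and `G₂` by adding all edges between
vertices of `G₁` and vertices of `G₂`. -/
def SimpleGraph.join {α β : Type*} (G₁ : SimpleGraph α) (G₂ : SimpleGraph β) :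
    SimpleGraph (α ⊕ β) where
  Adj u v :=
    match u, v with
    | Sum.inl a, Sum.inl b => G₁.Adj a b
    | Sum.inr a, Sum.inr b => G₂.Adj a b
    | Sum.inl _, Sum.inr _ => True
    | Sum.inr _, Sum.inl _ => True
  symm := by
    constructor
    rintro (a | a) (b | b) h <;> simp_all [SimpleGraph.adj_comm]
  loopless := by
    constructor
    rintro (a | a) h <;> simp_all

private lemma no_triangle' {V : Type*} {H : SimpleGraph V} (hac : H.IsAcyclic) {u v w : V}
    (huv : H.Adj u v) (hvw : H.Adj v w) (huw : H.Adj u w) : False := by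
  have hu := (isAcyclic_iff_path_unique.mp hac)
    (Path.singleton huv)
    ⟨Walk.cons huw (Walk.cons hvw.symm Walk.nil), by
      simp [Walk.isPath_def, huw.ne, huv.ne, hvw.ne']⟩
  have := congrArg (fun p : H.Path u v => p.1.length) hu
  simp [Path.singleton] at this

private lemma no_c4' {V : Type*} {H : SimpleGraph V} (hac : H.IsAcyclic) {u v w x : V}
    (huv : u ≠ v) (hwx : w ≠ x) (h1 : H.Adj u w) (h2 : H.Adj w v)
    (h3 : H.Adj u x) (h4 : H.Adj x v) : False := by
  have hu := (isAcyclic_iff_path_unique.mp hac)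
    (⟨Walk.cons h1 (Walk.cons h2 Walk.nil), by
      simp [Walk.isPath_def, h1.ne, huv, h2.ne]⟩ : H.Path u v)
    ⟨Walk.cons h3 (Walk.cons h4 Walk.nil), by
      simp [Walk.isPath_def, h3.ne, huv, h4.ne]⟩
  have := congrArg (fun p : H.Path u v => p.1.support) hu
  simp at this
  exact hwx this

/-- Let the finite simple graph `G` be the join of two disjoint
graphs `G₁` and `G₂`.  If `M` is an acyclic matching in `G`, then either every edge
of `M` lies inside `G₁`, or every edge of `M` lies inside `G₂`, or `M` consists of
exactly one edge joining a vertex of `G₁` to a vertex of `G₂`. -/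
theorem acyclicMatching_of_join {α β : Type*} [Fintype α] [Fintype β]
    (G₁ : SimpleGraph α) (G₂ : SimpleGraph β)
    (M : (G₁.join G₂).Subgraph) (hM : M.IsMatching)
    (hac : ((G₁.join G₂).induce M.verts).IsAcyclic) :
    (∀ v w, M.Adj v w → ∃ a b, v = Sum.inl a ∧ w = Sum.inl b) ∨
    (∀ v w, M.Adj v w → ∃ a b, v = Sum.inr a ∧ w = Sum.inr b) ∨
    (∃ (a : α) (b : β), M.edgeSet = {s(Sum.inl a, Sum.inr b)}) := by

  classical
  have jc : ∀ (a : α) (b : β), (G₁.join G₂).Adj (Sum.inl a) (Sum.inr b) := fun a b => trivial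
  have hadj : ∀ {u v : α ⊕ β} (hu : u ∈ M.verts) (hv : v ∈ M.verts),
      (G₁.join G₂).Adj u v → ((G₁.join G₂).induce M.verts).Adj ⟨u, hu⟩ ⟨v, hv⟩ :=
    fun _ _ h => h
  have huniq : ∀ {v w w' : α ⊕ β}, M.Adj v w → M.Adj v w' → w = w' :=
    by intro v w w' h h'; exact (hM h.fst_mem).unique h h'
  by_cases hcross : ∃ a b, M.Adj (Sum.inl a) (Sum.inr b)
  · obtain ⟨a, b, hab⟩ := hcross
    refine Or.inr (Or.inr ⟨a, b, ?_⟩)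
    ext e
    simp only [Set.mem_singleton_iff]
    constructor
    · induction e using Sym2.ind with
      | _ v w =>
        intro he
        rw [Subgraph.mem_edgeSet] at he
        have key : ∀ x y : α ⊕ β, M.Adj x y → ∀ p q, x = Sum.inl p → y = Sum.inr q →
            s(x, y) = s(Sum.inl a, Sum.inr b) := by
          rintro x y hxy p q rfl rfl
          by_cases hp : p = a
          · subst hp
            have : Sum.inr q = Sum.inr b := huniq hxy hab
            rw [this]
          · have hq : q ≠ b := by
              intro hq; subst hq
              exact hp (Sum.inl.inj (huniq hxy.symm hab.symm))
            exact False.elim <| no_c4' hac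
              (u := (⟨Sum.inl p, hxy.fst_mem⟩ : M.verts))
              (v := ⟨Sum.inl a, hab.fst_mem⟩)
              (w := ⟨Sum.inr q, hxy.snd_mem⟩)
              (x := ⟨Sum.inr b, hab.snd_mem⟩)
              (by simp [hp]) (by simp [hq])
              (hadj _ _ (M.adj_sub hxy))
              (hadj _ _ (jc a q).symm)
              (hadj _ _ (jc p b))
              (hadj _ _ (jc a b).symm)
        match v, w with
        | Sum.inl x, Sum.inl y =>
          exact False.elim <| no_triangle' hac
            (u := (⟨Sum.inl x, he.fst_mem⟩ : M.verts))
            (v := ⟨Sum.inl y, he.snd_mem⟩)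
            (w := ⟨Sum.inr b, hab.snd_mem⟩)
            (hadj _ _ (M.adj_sub he)) (hadj _ _ (jc y b)) (hadj _ _ (jc x b))
        | Sum.inr x, Sum.inr y =>
          exact False.elim <| no_triangle' hac
            (u := (⟨Sum.inr x, he.fst_mem⟩ : M.verts))
            (v := ⟨Sum.inr y, he.snd_mem⟩)
            (w := ⟨Sum.inl a, hab.fst_mem⟩)
            (hadj _ _ (M.adj_sub he)) (hadj _ _ (jc a y).symm) (hadj _ _ (jc a x).symm)
        | Sum.inl x, Sum.inr y => exact key _ _ he x y rfl rfl
        | Sum.inr x, Sum.inl y =>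
          rw [Sym2.eq_swap]
          exact key _ _ he.symm y x rfl rfl
    · intro he
      rw [he, Subgraph.mem_edgeSet]
      exact hab
  · have hnc : ∀ (a : α) (b : β), ¬ M.Adj (Sum.inl a) (Sum.inr b) :=
      fun a b h => hcross ⟨a, b, h⟩
    by_cases hR : ∃ x y, M.Adj (Sum.inr x) (Sum.inr y)
    · obtain ⟨x, y, hxy⟩ := hR
      refine Or.inr (Or.inl ?_)
      rintro (p | p) (q | q) h
      · exact False.elim <| no_triangle' hac
          (u := (⟨Sum.inl p, h.fst_mem⟩ : M.verts))
          (v := ⟨Sum.inl q, h.snd_mem⟩)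
          (w := ⟨Sum.inr x, hxy.fst_mem⟩)
          (hadj _ _ (M.adj_sub h)) (hadj _ _ (jc q x)) (hadj _ _ (jc p x))
      · exact absurd h (hnc p q)
      · exact absurd h.symm (hnc q p)
      · exact ⟨p, q, rfl, rfl⟩
    · refine Or.inl ?_
      rintro (p | p) (q | q) h
      · exact ⟨p, q, rfl, rfl⟩
      · exact absurd h (hnc p q)
      · exact absurd h.symm (hnc q p)
      · exact absurd ⟨p, q, h⟩ hR
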